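/- Let (d_l) be the Wright sequence with d_1 = d_2 = 5/36 and d_{l+1} = d_l + Σ_{i=1}^{l-1} d_i d_{l-i}/((l+1)·binom(l,i)), converging to limit d. Then d - d_l ≤ 8d^2 / (l-1) for all l ≥ 2 (in particular d - d_l = O(1/l)). -/

import Mathlib

open Finset


lemma choose_aux {l i : ℕ} (h2 : 2 ≤ i) (hil : i ≤ l / 2) :
    l.choose 2 ≤ l.choose i := by
  induction i with
  | zero => omega
  | succ n ih =>
    rcases Nat.lt_or_ge n 2 with h | h
    · have : n = 1 := by omega
      subst this; exact le_refl _
    · exact (ih h (by omega)).trans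
        (Nat.choose_le_succ_of_lt_half_left (by omega))

lemma choose_mid {l i : ℕ} (h2 : 2 ≤ i) (hil : i + 2 ≤ l) :
    l * (l - 1) ≤ 2 * l.choose i := by
  have key : l.choose 2 ≤ l.choose i := by
    rcases le_or_gt i (l / 2) with h | h
    · exact choose_aux h2 h
    · have hsym : l.choose i = l.choose (l - i) := (Nat.choose_symm (by omega)).symm
      rw [hsym]
      exact choose_aux (by omega) (by omega)
  have heven : Even (l * (l - 1)) := by
    have := Nat.even_mul_succ_self (l - 1)
    have h' : (l - 1) * (l - 1 + 1) = l * (l - 1) := by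
      have : l - 1 + 1 = l := by omega
      rw [this, Nat.mul_comm]
    rwa [h'] at this
  have h2c : 2 * l.choose 2 = l * (l - 1) := by
    rw [Nat.choose_two_right, Nat.mul_comm, Nat.div_mul_cancel heven.two_dvd]
  omega

lemma sum_choose_inv {l : ℕ} (hl : 2 ≤ l) :
    ∑ i ∈ Icc 1 (l - 1), (1 : ℝ) / (l.choose i) ≤ 4 / l := by
  rcases eq_or_lt_of_le hl with h | h
  · subst h
    norm_num
  · -- l ≥ 3
    have hl3 : 3 ≤ l := h
    have e1 : Icc 1 (l - 1) = insert 1 (Icc 2 (l - 1)) := by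
      ext x; simp [Finset.mem_Icc, Finset.mem_insert]; omega
    have e2 : Icc 2 (l - 1) = insert (l - 1) (Icc 2 (l - 2)) := by
      ext x; simp [Finset.mem_Icc, Finset.mem_insert]; omega
    have n1 : (1 : ℕ) ∉ Icc 2 (l - 1) := by simp
    have n2 : l - 1 ∉ Icc 2 (l - 2) := by simp [Finset.mem_Icc]; omega
    rw [e1, Finset.sum_insert n1, e2, Finset.sum_insert n2]
    have hc1 : (1 : ℝ) / (l.choose 1) = 1 / l := by rw [Nat.choose_one_right]
    have hc2 : (1 : ℝ) / (l.choose (l - 1)) = 1 / l := by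
      have : l.choose (l - 1) = l := by
        rw [show l - 1 = l - 1 from rfl, Nat.choose_symm (by omega), Nat.choose_one_right]
      rw [this]
    have hmid : ∑ i ∈ Icc 2 (l - 2), (1 : ℝ) / (l.choose i)
        ≤ (l - 3 : ℕ) • (2 / ((l : ℝ) * ((l : ℝ) - 1))) := by
      have hcard : (Icc 2 (l - 2)).card = l - 3 := by
        rw [Nat.card_Icc]; omega
      rw [← hcard]
      apply Finset.sum_le_card_nsmul
      intro i hi
      simp only [Finset.mem_Icc] at hi
      have hm := choose_mid (l := l) hi.1 (by omega)
      have hm' : (l : ℝ) * ((l : ℝ) - 1) ≤ 2 * (l.choose i) := by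
        have h3 := (Nat.cast_le (α := ℝ)).2 hm
        push_cast [Nat.cast_sub (show 1 ≤ l by omega)] at h3
        linarith
      have hpos : (0 : ℝ) < l.choose i := by
        have : 0 < l.choose i := Nat.choose_pos (by omega)
        exact_mod_cast this
      rw [div_le_div_iff₀ hpos (by nlinarith [show (3:ℝ) ≤ l from by exact_mod_cast hl3])]
      nlinarith [show (3:ℝ) ≤ l from by exact_mod_cast hl3]
    rw [hc1, hc2]
    have hcast : ((l - 3 : ℕ) : ℝ) = (l : ℝ) - 3 := by
      rw [Nat.cast_sub hl3]; norm_num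
    rw [nsmul_eq_mul, hcast] at hmid
    have hc : (3 : ℝ) ≤ l := by exact_mod_cast hl3
    have hfin : ((l : ℝ) - 3) * (2 / ((l : ℝ) * ((l : ℝ) - 1))) ≤ 2 / l := by
      rw [mul_div_assoc', div_le_div_iff₀ (by nlinarith) (by linarith)]
      nlinarith
    have : (4 : ℝ) / l = 1 / l + 1 / l + 2 / l := by ring
    rw [this]
    linarith


/-- For Wright's sequence `d_l` converging to a limit `D`, one has
`D - d_l ≤ 8 D² / (l - 1)` for all `l ≥ 2` (so `D - d_l = O(1/l)`). -/
theorem stmt2 (d : ℕ → ℝ) (h1 : d 1 = 5 / 36) (h2 : d 2 = 5 / 36)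
    (hrec : ∀ l ≥ 2, d (l + 1) =
      d l + ∑ i ∈ Finset.Icc 1 (l - 1), d i * d (l - i) / (((l : ℝ) + 1) * (l.choose i)))
    (D : ℝ) (hlim : Filter.Tendsto d Filter.atTop (nhds D)) :
    ∀ l ≥ 2, D - d l ≤ 8 * D ^ 2 / ((l : ℝ) - 1) := by
  -- nonnegativity
  have hpos : ∀ k, 1 ≤ k → 0 ≤ d k := by
    intro k
    induction k using Nat.strong_induction_on with
    | _ k ih =>
      intro hk
      rcases Nat.lt_or_ge k 3 with hk3 | hk3
      · interval_cases k
        · rw [h1]; norm_num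
        · rw [h2]; norm_num
      · obtain ⟨l, rfl⟩ : ∃ l, k = l + 1 := ⟨k - 1, by omega⟩
        have hl2 : 2 ≤ l := by omega
        rw [hrec l hl2]
        have hsum : 0 ≤ ∑ i ∈ Finset.Icc 1 (l - 1),
            d i * d (l - i) / (((l : ℝ) + 1) * (l.choose i)) := by
          apply Finset.sum_nonneg
          intro i hi
          simp only [Finset.mem_Icc] at hi
          apply div_nonneg
          · exact mul_nonneg (ih i (by omega) (by omega)) (ih (l - i) (by omega) (by omega))
          · positivity
        have hdl : 0 ≤ d l := ih l (by omega) (by omega)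
        linarith
  -- one-step monotonicity
  have hstep0 : ∀ n, 1 ≤ n → d n ≤ d (n + 1) := by
    intro n hn
    rcases eq_or_lt_of_le hn with h | h
    · rw [← h]; norm_num [h1, h2]
    · rw [hrec n h]
      have hsum : 0 ≤ ∑ i ∈ Finset.Icc 1 (n - 1),
          d i * d (n - i) / (((n : ℝ) + 1) * (n.choose i)) := by
        apply Finset.sum_nonneg
        intro i hi
        simp only [Finset.mem_Icc] at hi
        apply div_nonneg
        · exact mul_nonneg (hpos i (by omega)) (hpos (n - i) (by omega))
        · positivity
      linarith
  have hmono : ∀ m n, 1 ≤ m → m ≤ n → d m ≤ d n := by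
    intro m n h1m hmn
    induction n, hmn using Nat.le_induction with
    | base => exact le_refl _
    | succ n hn ih => exact ih.trans (hstep0 n (by omega))
  have hleD : ∀ k, 1 ≤ k → d k ≤ D := by
    intro k hk
    apply ge_of_tendsto hlim
    filter_upwards [Filter.eventually_atTop.2 ⟨k, fun n hn => hmono k n hk hn⟩] with n h using h
  have hD0 : 0 ≤ D := le_trans (hpos 1 le_rfl) (hleD 1 le_rfl)
  -- key step bound
  have hstep : ∀ l, 2 ≤ l → d (l + 1) ≤ d l + 4 * D ^ 2 * (1 / l - 1 / ((l : ℝ) + 1)) := by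
    intro l hl
    have hlR : (2 : ℝ) ≤ l := by exact_mod_cast hl
    rw [hrec l hl]
    have hterm : ∀ i ∈ Finset.Icc 1 (l - 1),
        d i * d (l - i) / (((l : ℝ) + 1) * (l.choose i))
          ≤ D ^ 2 / ((l : ℝ) + 1) * (1 / (l.choose i)) := by
      intro i hi
      simp only [Finset.mem_Icc] at hi
      have hchoose : (0 : ℝ) < l.choose i := by
        exact_mod_cast Nat.choose_pos (by omega : i ≤ l)
      have hnum : d i * d (l - i) ≤ D ^ 2 := by
        have hi1 := hpos i (by omega)
        have hi2 := hpos (l - i) (by omega)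
        have hd1 := hleD i (by omega)
        have hd2 := hleD (l - i) (by omega)
        nlinarith
      have heq2 : D ^ 2 / ((l : ℝ) + 1) * (1 / (l.choose i))
          = D ^ 2 / (((l : ℝ) + 1) * (l.choose i)) := by
        field_simp
      rw [heq2]
      gcongr
    have hsum : ∑ i ∈ Finset.Icc 1 (l - 1),
        d i * d (l - i) / (((l : ℝ) + 1) * (l.choose i))
          ≤ D ^ 2 / ((l : ℝ) + 1) * (4 / l) := by
      calc ∑ i ∈ Finset.Icc 1 (l - 1), d i * d (l - i) / (((l : ℝ) + 1) * (l.choose i))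
          ≤ ∑ i ∈ Finset.Icc 1 (l - 1), D ^ 2 / ((l : ℝ) + 1) * (1 / (l.choose i)) :=
            Finset.sum_le_sum hterm
        _ = D ^ 2 / ((l : ℝ) + 1) * ∑ i ∈ Finset.Icc 1 (l - 1), (1 : ℝ) / (l.choose i) := by
            rw [Finset.mul_sum]
        _ ≤ D ^ 2 / ((l : ℝ) + 1) * (4 / l) := by
            apply mul_le_mul_of_nonneg_left (sum_choose_inv hl)
            positivity
    have heq : D ^ 2 / ((l : ℝ) + 1) * (4 / l) = 4 * D ^ 2 * (1 / l - 1 / ((l : ℝ) + 1)) := by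
      field_simp
      ring
    linarith [hsum, heq ▸ hsum]
  -- telescoping bound
  have hbound : ∀ l, 2 ≤ l → ∀ n, l ≤ n → d n ≤ d l + 4 * D ^ 2 * (1 / l - 1 / (n : ℝ)) := by
    intro l hl n hn
    induction n, hn using Nat.le_induction with
    | base => simp
    | succ n hn ih =>
      have h1 := hstep n (by omega)
      have : (1:ℝ)/l - 1/(n:ℝ) + (1/(n:ℝ) - 1/((n:ℝ)+1)) = 1/l - 1/((n:ℝ)+1) := by ring
      push_cast
      push_cast at ih h1
      nlinarith [ih, h1]
  -- conclude
  intro l hl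
  have hlR : (2 : ℝ) ≤ l := by exact_mod_cast hl
  have hDle : D ≤ d l + 4 * D ^ 2 / l := by
    apply le_of_tendsto hlim
    filter_upwards [Filter.eventually_atTop.2 ⟨l, fun n hn => hbound l hl n hn⟩] with n h
    have hn0 : (0 : ℝ) ≤ 1 / (n : ℝ) := by positivity
    have : 4 * D ^ 2 * (1 / (l:ℝ) - 1 / (n : ℝ)) ≤ 4 * D ^ 2 / l := by
      rw [mul_sub, mul_one_div]
      nlinarith [sq_nonneg D]
    linarith
  have hfin : 4 * D ^ 2 / (l : ℝ) ≤ 8 * D ^ 2 / ((l : ℝ) - 1) := by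
    rw [div_le_div_iff₀ (by linarith) (by linarith)]
    nlinarith [sq_nonneg D]
  linarith
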